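/- Let m ≥ 2 and let G be a simple graph such that the complete bipartite graph K_{2,2} is a subgraph of G and G is a subgraph of the complete bipartite graph K_{2,m} (on the same vertex set). Then H_G^φ = [2, ∞) and {1} ∪ [2, ∞) ⊆ H_G^ψ ⊆ [1, ∞). -/

import Mathlib

open Matrix

/-- Entrywise power with the convention `0 ^ α := 0` for all `α`. -/
noncomputable def powF (α x : ℝ) : ℝ := if x = 0 then 0 else x ^ α

/-- `ψ_α(x) := sgn(x) * |x| ^ α`, with `ψ_α(0) := 0`. -/
noncomputable def psiF (α x : ℝ) : ℝ := if x = 0 then 0 else Real.sign x * |x| ^ α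

/-- `φ_α(x) := |x| ^ α`, with `φ_α(0) := 0`. -/
noncomputable def phiF (α x : ℝ) : ℝ := if x = 0 then 0 else |x| ^ α
/-- `P_G(I)`: symmetric positive semidefinite matrices with entries in `I`, vanishing at
off-diagonal positions corresponding to non-edges of `G`. -/
def PG {V : Type*} [Fintype V] (G : SimpleGraph V) (I : Set ℝ) : Set (Matrix V V ℝ) :=
  {M | M.PosSemidef ∧ (∀ i j, M i j ∈ I) ∧ ∀ i j, i ≠ j → ¬ G.Adj i j → M i j = 0}

/-- `H_G`: powers `α` such that `A ↦ A^{∘α}` maps `P_G([0,∞))` into `P_G(ℝ)`. -/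
noncomputable def HSet {V : Type*} [Fintype V] (G : SimpleGraph V) : Set ℝ :=
  {α | ∀ A ∈ PG G (Set.Ici 0), A.map (powF α) ∈ PG G Set.univ}

/-- `H_G^ψ`: powers `α` such that `ψ_α[-]` maps `P_G(ℝ)` into `P_G(ℝ)`. -/
noncomputable def HSetPsi {V : Type*} [Fintype V] (G : SimpleGraph V) : Set ℝ :=
  {α | ∀ A ∈ PG G Set.univ, A.map (psiF α) ∈ PG G Set.univ}

/-- `H_G^φ`: powers `α` such that `φ_α[-]` maps `P_G(ℝ)` into `P_G(ℝ)`. -/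
noncomputable def HSetPhi {V : Type*} [Fintype V] (G : SimpleGraph V) : Set ℝ :=
  {α | ∀ A ∈ PG G Set.univ, A.map (phiF α) ∈ PG G Set.univ}

/-- A graph is chordal if every cycle of length at least 4 has a chord, i.e. an edge of `G`
joining two vertices of the cycle that is not an edge of the cycle. -/
def IsChordalG {V : Type*} (G : SimpleGraph V) : Prop :=
  ∀ ⦃v : V⦄ (w : G.Walk v v), w.IsCycle → 4 ≤ w.length →
    ∃ i j : V, i ∈ w.support ∧ j ∈ w.support ∧ G.Adj i j ∧ ¬ w.toSubgraph.Adj i j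


section GKRAux
open Finset

lemma phiF_nonneg (α x : ℝ) : 0 ≤ phiF α x := by
  unfold phiF; split
  · exact le_rfl
  · positivity

lemma phiF_zero (α : ℝ) : phiF α 0 = 0 := if_pos rfl
lemma psiF_zero (α : ℝ) : psiF α 0 = 0 := if_pos rfl

lemma psiF_one' (x : ℝ) : psiF 1 x = x := by
  unfold psiF; split
  · exact (by assumption : x = 0).symm
  · rename_i hx
    rw [Real.rpow_one]
    rcases lt_trichotomy x 0 with h|h|h
    · rw [Real.sign_of_neg h, abs_of_neg h]; ring
    · exact absurd h hx
    · rw [Real.sign_of_pos h, abs_of_pos h]; ring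

lemma psiF_eq_phiF {α x : ℝ} (hx : 0 ≤ x) : psiF α x = phiF α x := by
  unfold psiF phiF; split
  · rfl
  · rename_i hx0
    rw [Real.sign_of_pos (lt_of_le_of_ne hx (Ne.symm hx0)), one_mul]

lemma sq_phiF (α b : ℝ) : (phiF α b)^2 = phiF α (b^2) := by
  by_cases hb : b = 0
  · simp [phiF, hb]
  · have h2 : b^2 ≠ 0 := pow_ne_zero _ hb
    simp only [phiF, if_neg hb, if_neg h2]
    rw [abs_pow, ← Real.rpow_natCast (|b|^α) 2, ← Real.rpow_natCast |b| 2,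
      ← Real.rpow_mul (abs_nonneg b), ← Real.rpow_mul (abs_nonneg b)]
    norm_num
    ring_nf

lemma sq_psiF (α b : ℝ) : (psiF α b)^2 = phiF α (b^2) := by
  by_cases hb : b = 0
  · simp [psiF, phiF, hb]
  · have h2 : (psiF α b)^2 = (phiF α b)^2 := by
      simp only [psiF, phiF, if_neg hb]
      rcases Real.sign_apply_eq_of_ne_zero b hb with h|h <;> rw [h] <;> ring
    rw [h2, sq_phiF]

lemma qf_expand {n : Type*} [Fintype n] (M : Matrix n n ℝ) (z : n → ℝ) :
    z ⬝ᵥ (M *ᵥ z) = ∑ v, ∑ w, z v * M v w * z w := by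
  simp only [dotProduct, mulVec, Finset.mul_sum, mul_assoc]

lemma qf_eval {m : ℕ} (M : Matrix (Fin 2 ⊕ Fin m) (Fin 2 ⊕ Fin m) ℝ)
    (hsym : ∀ v w, M v w = M w v)
    (hL : ∀ i i' : Fin 2, i ≠ i' → M (.inl i) (.inl i') = 0)
    (hR : ∀ j j' : Fin m, j ≠ j' → M (.inr j) (.inr j') = 0)
    (x : Fin 2 → ℝ) (y : Fin m → ℝ) :
    (Sum.elim x y) ⬝ᵥ (M *ᵥ (Sum.elim x y)) =
      (∑ i, M (.inl i) (.inl i) * x i ^ 2) + (∑ j, M (.inr j) (.inr j) * y j ^ 2)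
      + 2 * ∑ i, ∑ j, M (.inl i) (.inr j) * x i * y j := by
  rw [qf_expand]
  simp only [Fintype.sum_sum_type, Sum.elim_inl, Sum.elim_inr]
  rw [Finset.sum_add_distrib, Finset.sum_add_distrib]
  have hS1 : ∑ i : Fin 2, ∑ i' : Fin 2, x i * M (.inl i) (.inl i') * x i'
      = ∑ i, M (.inl i) (.inl i) * x i ^ 2 := by
    refine Finset.sum_congr rfl fun i _ => ?_
    rw [Finset.sum_eq_single i]
    · ring
    · intro i' _ hne; rw [hL i i' (Ne.symm hne)]; ring
    · intro h; exact absurd (Finset.mem_univ i) h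
  have hS4 : ∑ j : Fin m, ∑ j' : Fin m, y j * M (.inr j) (.inr j') * y j'
      = ∑ j, M (.inr j) (.inr j) * y j ^ 2 := by
    refine Finset.sum_congr rfl fun j _ => ?_
    rw [Finset.sum_eq_single j]
    · ring
    · intro j' _ hne; rw [hR j j' (Ne.symm hne)]; ring
    · intro h; exact absurd (Finset.mem_univ j) h
  have hS2 : ∑ i : Fin 2, ∑ j : Fin m, x i * M (.inl i) (.inr j) * y j
      = ∑ i, ∑ j, M (.inl i) (.inr j) * x i * y j :=
    Finset.sum_congr rfl fun i _ => Finset.sum_congr rfl fun j _ => by ring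
  have hS3 : ∑ j : Fin m, ∑ i : Fin 2, y j * M (.inr j) (.inl i) * x i
      = ∑ i, ∑ j, M (.inl i) (.inr j) * x i * y j := by
    rw [Finset.sum_comm]
    refine Finset.sum_congr rfl fun i _ => Finset.sum_congr rfl fun j _ => ?_
    rw [hsym]; ring
  rw [hS1, hS4, hS2, hS3]; ring

lemma key_ineq {m : ℕ} (C : Fin 2 → ℝ) (D : Fin m → ℝ) (g t s : Fin 2 → Fin m → ℝ)
    (ht : ∀ i j, 0 ≤ t i j) (hs : ∀ i j, 0 ≤ s i j)
    (hg : ∀ i j, (g i j)^2 ≤ t i j * s i j)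
    (hC : ∀ i, ∑ j, t i j ≤ C i) (hD : ∀ j, ∑ i, s i j ≤ D j)
    (x : Fin 2 → ℝ) (y : Fin m → ℝ) :
    0 ≤ (∑ i, C i * x i ^ 2) + (∑ j, D j * y j ^ 2) + 2 * ∑ i, ∑ j, g i j * x i * y j := by
  have pair : ∀ i j, 0 ≤ t i j * x i ^ 2 + s i j * y j ^ 2 + 2 * (g i j * x i * y j) := by
    intro i j
    rcases eq_or_lt_of_le (ht i j) with h | h
    · have hg0 : g i j = 0 := by
        have h1 := hg i j
        rw [← h, zero_mul] at h1
        have := sq_nonneg (g i j)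
        have : (g i j)^2 = 0 := le_antisymm h1 this
        exact pow_eq_zero_iff two_ne_zero |>.mp this
      rw [hg0, ← h]
      have := hs i j
      nlinarith [sq_nonneg (y j)]
    · nlinarith [sq_nonneg (t i j * x i + g i j * y j), hg i j, sq_nonneg (y j)]
  have h3 : 0 ≤ ∑ i : Fin 2, ∑ j : Fin m,
      (t i j * x i ^ 2 + s i j * y j ^ 2 + 2 * (g i j * x i * y j)) :=
    Finset.sum_nonneg fun i _ => Finset.sum_nonneg fun j _ => pair i j
  have hsplit : ∑ i : Fin 2, ∑ j : Fin m,
      (t i j * x i ^ 2 + s i j * y j ^ 2 + 2 * (g i j * x i * y j))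
      = (∑ i, ∑ j, t i j * x i ^ 2) + (∑ i, ∑ j, s i j * y j ^ 2)
        + 2 * ∑ i, ∑ j, g i j * x i * y j := by
    simp only [Finset.sum_add_distrib, Finset.mul_sum]
  have h1 : ∑ i : Fin 2, ∑ j : Fin m, t i j * x i ^ 2 ≤ ∑ i, C i * x i ^ 2 := by
    apply Finset.sum_le_sum; intro i _
    rw [← Finset.sum_mul]
    exact mul_le_mul_of_nonneg_right (hC i) (sq_nonneg _)
  have h2 : ∑ i : Fin 2, ∑ j : Fin m, s i j * y j ^ 2 ≤ ∑ j, D j * y j ^ 2 := by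
    rw [Finset.sum_comm]
    apply Finset.sum_le_sum; intro j _
    rw [← Finset.sum_mul]
    exact mul_le_mul_of_nonneg_right (hD j) (sq_nonneg _)
  rw [hsplit] at h3
  linarith

lemma block_psd {m : ℕ} {α : ℝ} (hα : 2 ≤ α)
    (c : Fin 2 → ℝ) (d : Fin m → ℝ) (b : Fin 2 → Fin m → ℝ) (g : Fin 2 → Fin m → ℝ)
    (hc : ∀ i, 0 ≤ c i) (hd : ∀ j, 0 ≤ d j)
    (hF1 : ∀ i j, b i j ^ 2 ≤ c i * d j)
    (hF2 : ∀ i, ∑ j, b i j ^ 2 / d j ≤ c i)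
    (hF3 : ∀ j, ∑ i, b i j ^ 2 / c i ≤ d j)
    (hg : ∀ i j, (g i j)^2 = phiF α ((b i j)^2))
    (x : Fin 2 → ℝ) (y : Fin m → ℝ) :
    0 ≤ (∑ i, phiF α (c i) * x i ^ 2) + (∑ j, phiF α (d j) * y j ^ 2)
      + 2 * ∑ i, ∑ j, g i j * x i * y j := by
  set e : Fin 2 → Fin m → ℝ := fun i j => b i j ^ 2 / (c i * d j) with he_def
  set σ : Fin m → ℝ := fun j => e 0 j + e 1 j with hσ_def
  set t : Fin 2 → Fin m → ℝ := fun i j => phiF α (c i) * (e i j) ^ (α - 1) * σ j with ht_def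
  set s : Fin 2 → Fin m → ℝ :=
    fun i j => if σ j = 0 then 0 else e i j * phiF α (d j) / σ j with hs_def
  have he0 : ∀ i j, 0 ≤ e i j := fun i j =>
    div_nonneg (sq_nonneg _) (mul_nonneg (hc i) (hd j))
  have he1 : ∀ i j, e i j ≤ 1 := by
    intro i j
    by_cases h : c i * d j = 0
    · simp [he_def, h]
    · exact (div_le_one (lt_of_le_of_ne (mul_nonneg (hc i) (hd j)) (Ne.symm h))).mpr (hF1 i j)
  have hσ0 : ∀ j, 0 ≤ σ j := fun j => add_nonneg (he0 0 j) (he0 1 j)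
  have hσ1 : ∀ j, σ j ≤ 1 := by
    intro j
    have hrw : ∀ i, e i j = b i j ^ 2 / c i / d j := by
      intro i; rw [he_def]; rw [div_div]
    by_cases h : d j = 0
    · simp [hσ_def, hrw, h]
    · have hdj : 0 < d j := lt_of_le_of_ne (hd j) (Ne.symm h)
      have : σ j = (b 0 j ^ 2 / c 0 + b 1 j ^ 2 / c 1) / d j := by
        rw [hσ_def]; simp only [hrw]; rw [← add_div]
      rw [this, div_le_one hdj]
      calc b 0 j ^ 2 / c 0 + b 1 j ^ 2 / c 1 = ∑ i : Fin 2, b i j ^ 2 / c i := by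
            rw [Fin.sum_univ_two]
        _ ≤ d j := hF3 j
  have hrow : ∀ i, ∑ j, e i j ≤ 1 := by
    intro i
    have hrw : ∀ j, e i j = b i j ^ 2 / d j / c i := by
      intro j; simp only [he_def]; rw [mul_comm (c i) (d j), div_div]
    by_cases h : c i = 0
    · simp [hrw, h]
    · have hci : 0 < c i := lt_of_le_of_ne (hc i) (Ne.symm h)
      simp only [hrw]
      rw [← Finset.sum_div, div_le_one hci]
      exact hF2 i
  have ht : ∀ i j, 0 ≤ t i j := fun i j =>
    mul_nonneg (mul_nonneg (phiF_nonneg _ _) (Real.rpow_nonneg (he0 i j) _)) (hσ0 j)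
  have hs : ∀ i j, 0 ≤ s i j := by
    intro i j
    rw [hs_def]
    dsimp only
    split
    · exact le_rfl
    · exact div_nonneg (mul_nonneg (he0 i j) (phiF_nonneg _ _)) (hσ0 j)
  have hb0 : ∀ i j, b i j ≠ 0 → 0 < c i ∧ 0 < d j := by
    intro i j hb
    have hbb : 0 < b i j ^ 2 := by positivity
    have hcd : 0 < c i * d j := lt_of_lt_of_le hbb (hF1 i j)
    have hci : 0 < c i := by nlinarith [hc i, hd j]
    have hdj : 0 < d j := by nlinarith [hc i, hd j]
    exact ⟨hci, hdj⟩
  have hgts : ∀ i j, (g i j)^2 ≤ t i j * s i j := by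
    intro i j
    by_cases hb : b i j = 0
    · rw [hg i j, hb]
      norm_num [phiF]
      exact mul_nonneg (ht i j) (hs i j)
    · obtain ⟨hci, hdj⟩ := hb0 i j hb
      have hbb : 0 < b i j ^ 2 := by positivity
      have hcd : 0 < c i * d j := mul_pos hci hdj
      have hej : 0 < e i j := div_pos hbb hcd
      have hσp : 0 < σ j := by
        rcases (by omega : i = (0 : Fin 2) ∨ i = 1) with rfl | rfl
        · have := he0 1 j; rw [hσ_def]; dsimp only; linarith
        · have := he0 0 j; rw [hσ_def]; dsimp only; linarith
      have hsval : s i j = e i j * phiF α (d j) / σ j := by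
        rw [hs_def]; dsimp only; rw [if_neg hσp.ne']
      have hphic : phiF α (c i) = c i ^ α := by
        rw [phiF, if_neg hci.ne', abs_of_pos hci]
      have hphid : phiF α (d j) = d j ^ α := by
        rw [phiF, if_neg hdj.ne', abs_of_pos hdj]
      have he_split : (e i j) ^ (α - 1) * e i j = e i j ^ α := by
        nth_rewrite 2 [← Real.rpow_one (e i j)]
        rw [← Real.rpow_add hej]; ring_nf
      have hts : t i j * s i j = c i ^ α * d j ^ α * e i j ^ α := by
        calc t i j * s i j
            = c i ^ α * d j ^ α * (e i j ^ (α - 1) * e i j) * (σ j / σ j) := by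
              simp only [ht_def]; rw [hsval, hphic, hphid]; ring
          _ = c i ^ α * d j ^ α * e i j ^ α := by
              rw [div_self hσp.ne', he_split, mul_one]
      have hkey : c i ^ α * d j ^ α * e i j ^ α = (b i j ^ 2) ^ α := by
        rw [← Real.mul_rpow hci.le hdj.le,
          ← Real.mul_rpow (mul_nonneg hci.le hdj.le) hej.le]
        congr 1
        simp only [he_def]
        field_simp
      rw [hts, hg i j, phiF, if_neg hbb.ne', abs_of_pos hbb, hkey]
  have hC : ∀ i, ∑ j, t i j ≤ phiF α (c i) := by
    intro i
    have hstep : ∀ j, (e i j) ^ (α - 1) * σ j ≤ e i j := by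
      intro j
      have h5 : (e i j) ^ (α - 1) ≤ e i j := by
        have := Real.rpow_le_rpow_of_exponent_ge' (he0 i j) (he1 i j)
          (by norm_num : (0:ℝ) ≤ 1) (by linarith : (1:ℝ) ≤ α - 1)
        rwa [Real.rpow_one] at this
      calc (e i j) ^ (α - 1) * σ j ≤ e i j * 1 :=
            mul_le_mul h5 (hσ1 j) (hσ0 j) (he0 i j)
        _ = e i j := mul_one _
    calc ∑ j, t i j = phiF α (c i) * ∑ j, (e i j) ^ (α - 1) * σ j := by
          rw [Finset.mul_sum]; exact Finset.sum_congr rfl fun j _ => by rw [ht_def]; ring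
      _ ≤ phiF α (c i) * 1 := by
          apply mul_le_mul_of_nonneg_left _ (phiF_nonneg _ _)
          exact le_trans (Finset.sum_le_sum fun j _ => hstep j) (hrow i)
      _ = phiF α (c i) := mul_one _
  have hD : ∀ j, ∑ i, s i j ≤ phiF α (d j) := by
    intro j
    by_cases h : σ j = 0
    · simp only [hs_def, h, if_pos]
      simp [phiF_nonneg]
    · have : ∑ i : Fin 2, s i j = phiF α (d j) := by
        simp only [hs_def, if_neg h]
        rw [Fin.sum_univ_two, ← add_div, ← add_mul]
        rw [hσ_def] at h ⊢
        field_simp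
      rw [this]
  exact key_ineq (fun i => phiF α (c i)) (fun j => phiF α (d j)) g t s ht hs hgts hC hD x y

-- collapse lemmas
lemma sum_ite_sq {n : Type*} [Fintype n] [DecidableEq n] (h : n → ℝ) (k : n) (u : ℝ) :
    ∑ k', h k' * (if k' = k then u else 0)^2 = h k * u^2 := by
  rw [Finset.sum_eq_single k]
  · simp
  · intro k' _ hne; simp [hne]
  · intro hk; exact absurd (Finset.mem_univ k) hk

lemma collapse_left {n p : Type*} [Fintype n] [DecidableEq n] [Fintype p]
    (hmat : n → p → ℝ) (k : n) (u : ℝ) (y : p → ℝ) :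
    ∑ k', ∑ l', hmat k' l' * (if k' = k then u else 0) * y l'
      = ∑ l', hmat k l' * u * y l' := by
  rw [Finset.sum_eq_single k]
  · simp
  · intro k' _ hne; simp [hne]
  · intro hk; exact absurd (Finset.mem_univ k) hk

lemma collapse_right {n p : Type*} [Fintype n] [Fintype p] [DecidableEq p]
    (hmat : n → p → ℝ) (l : p) (v : ℝ) (x : n → ℝ) :
    ∑ k', ∑ l', hmat k' l' * x k' * (if l' = l then v else 0)
      = ∑ k', hmat k' l * x k' * v := by
  refine Finset.sum_congr rfl fun k' _ => ?_
  rw [Finset.sum_eq_single l]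
  · simp
  · intro l' _ hne; simp [hne]
  · intro hl; exact absurd (Finset.mem_univ l) hl

lemma collapse_both {n p : Type*} [Fintype n] [DecidableEq n] [Fintype p] [DecidableEq p]
    (hmat : n → p → ℝ) (k : n) (l : p) (u v : ℝ) :
    ∑ k', ∑ l', hmat k' l' * (if k' = k then u else 0) * (if l' = l then v else 0)
      = hmat k l * u * v := by
  rw [collapse_left]
  rw [Finset.sum_eq_single l]
  · simp
  · intro l' _ hne; simp [hne]
  · intro hl; exact absurd (Finset.mem_univ l) hl

lemma map_mem_PG {m : ℕ} (G : SimpleGraph (Fin 2 ⊕ Fin m))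
    (hsub : G ≤ completeBipartiteGraph (Fin 2) (Fin m))
    {α : ℝ} (hα : 2 ≤ α) (F : ℝ → ℝ)
    (hFd : ∀ x : ℝ, 0 ≤ x → F x = phiF α x)
    (hFsq : ∀ b : ℝ, (F b)^2 = phiF α (b^2))
    {A : Matrix (Fin 2 ⊕ Fin m) (Fin 2 ⊕ Fin m) ℝ} (hA : A ∈ PG G Set.univ) :
    A.map F ∈ PG G Set.univ := by
  obtain ⟨hpsd, -, hpat⟩ := hA
  have hF0 : F 0 = 0 := by
    have := hFsq 0
    have h2 := hFd 0 le_rfl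
    simp [phiF] at h2
    exact h2
  have hGL : ∀ i i' : Fin 2, ¬ G.Adj (.inl i) (.inl i') := by
    intro i i' h
    have := hsub h
    simp at this
  have hGR : ∀ j j' : Fin m, ¬ G.Adj (.inr j) (.inr j') := by
    intro j j' h
    have := hsub h
    simp at this
  have hAL : ∀ i i' : Fin 2, i ≠ i' → A (.inl i) (.inl i') = 0 := fun i i' h =>
    hpat _ _ (by simp [h]) (hGL i i')
  have hAR : ∀ j j' : Fin m, j ≠ j' → A (.inr j) (.inr j') = 0 := fun j j' h =>
    hpat _ _ (by simp [h]) (hGR j j')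
  have hsymA : ∀ v w, A v w = A w v := by
    intro v w
    conv_lhs => rw [← hpsd.1]
    simp [Matrix.conjTranspose_apply]
  set c : Fin 2 → ℝ := fun i => A (.inl i) (.inl i) with hc_def
  set d : Fin m → ℝ := fun j => A (.inr j) (.inr j) with hd_def
  set b : Fin 2 → Fin m → ℝ := fun i j => A (.inl i) (.inr j) with hb_def
  have QA : ∀ (x : Fin 2 → ℝ) (y : Fin m → ℝ),
      0 ≤ (∑ i, c i * x i ^ 2) + (∑ j, d j * y j ^ 2) + 2 * ∑ i, ∑ j, b i j * x i * y j := by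
    intro x y
    have h := hpsd.dotProduct_mulVec_nonneg (Sum.elim x y)
    rwa [star_trivial, qf_eval A hsymA hAL hAR] at h
  have hc : ∀ i, 0 ≤ c i := by
    intro i
    have h := QA (fun i' => if i' = i then 1 else 0) 0
    rw [sum_ite_sq, collapse_left] at h
    simpa using h
  have hd : ∀ j, 0 ≤ d j := by
    intro j
    have h := QA 0 (fun j' => if j' = j then 1 else 0)
    rw [sum_ite_sq] at h
    simpa using h
  have hF1 : ∀ i j, b i j ^ 2 ≤ c i * d j := by
    intro i j
    have hq : ∀ u : ℝ, 0 ≤ c i * (u * u) + (2 * b i j) * u + d j := by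
      intro u
      have h := QA (fun i' => if i' = i then u else 0) (fun j' => if j' = j then 1 else 0)
      rw [sum_ite_sq, sum_ite_sq, collapse_both] at h
      ring_nf at h ⊢
      linarith
    have h := discrim_le_zero hq
    unfold discrim at h
    nlinarith [h]
  have hbc0 : ∀ i j, c i = 0 → b i j = 0 := by
    intro i j h
    have := hF1 i j
    rw [h, zero_mul] at this
    nlinarith [sq_nonneg (b i j)]
  have hbd0 : ∀ i j, d j = 0 → b i j = 0 := by
    intro i j h
    have := hF1 i j
    rw [h, mul_zero] at this
    nlinarith [sq_nonneg (b i j)]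
  have hF2 : ∀ i, ∑ j, b i j ^ 2 / d j ≤ c i := by
    intro i
    have h := QA (fun i' => if i' = i then 1 else 0) (fun j => -(b i j / d j))
    rw [sum_ite_sq, collapse_left] at h
    have hcomb : (∑ j, d j * (-(b i j / d j)) ^ 2) + 2 * ∑ j, b i j * 1 * (-(b i j / d j))
        = -∑ j, b i j ^ 2 / d j := by
      rw [Finset.mul_sum, ← Finset.sum_add_distrib, ← Finset.sum_neg_distrib]
      refine Finset.sum_congr rfl fun j _ => ?_
      by_cases hdj : d j = 0
      · rw [hbd0 i j hdj, hdj]; ring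
      · field_simp
        ring
    linarith [h, hcomb]
  have hF3 : ∀ j, ∑ i, b i j ^ 2 / c i ≤ d j := by
    intro j
    have h := QA (fun i => -(b i j / c i)) (fun j' => if j' = j then 1 else 0)
    rw [sum_ite_sq, collapse_right] at h
    have hcomb : (∑ i, c i * (-(b i j / c i)) ^ 2) + 2 * ∑ i, b i j * (-(b i j / c i)) * 1
        = -∑ i, b i j ^ 2 / c i := by
      rw [Finset.mul_sum, ← Finset.sum_add_distrib, ← Finset.sum_neg_distrib]
      refine Finset.sum_congr rfl fun i _ => ?_
      by_cases hci : c i = 0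
      · rw [hbc0 i j hci, hci]; ring
      · field_simp
        ring
    linarith [h, hcomb]
  -- now conclude
  refine ⟨Matrix.PosSemidef.of_dotProduct_mulVec_nonneg ?_ ?_, fun i j => Set.mem_univ _, ?_⟩
  · ext i j
    simp only [Matrix.conjTranspose_apply, Matrix.map_apply, star_trivial]
    exact congrArg F (hsymA j i)
  · intro z
    rw [star_trivial, ← Sum.elim_comp_inl_inr z]
    have hML : ∀ i i' : Fin 2, i ≠ i' → (A.map F) (.inl i) (.inl i') = 0 := by
      intro i i' h; rw [Matrix.map_apply, hAL i i' h, hF0]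
    have hMR : ∀ j j' : Fin m, j ≠ j' → (A.map F) (.inr j) (.inr j') = 0 := by
      intro j j' h; rw [Matrix.map_apply, hAR j j' h, hF0]
    have hsymM : ∀ v w, (A.map F) v w = (A.map F) w v := fun v w =>
      congrArg F (hsymA v w)
    rw [qf_eval _ hsymM hML hMR]
    have h1 : ∀ i : Fin 2, (A.map F) (.inl i) (.inl i) = phiF α (c i) := fun i => by
      rw [Matrix.map_apply, hFd _ (hc i)]
    have h2 : ∀ j : Fin m, (A.map F) (.inr j) (.inr j) = phiF α (d j) := fun j => by
      rw [Matrix.map_apply, hFd _ (hd j)]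
    have e1 : (∑ i, (A.map F) (.inl i) (.inl i) * (z ∘ Sum.inl) i ^ 2)
        = ∑ i, phiF α (c i) * (z ∘ Sum.inl) i ^ 2 :=
      Finset.sum_congr rfl fun i _ => by rw [h1]
    have e2 : (∑ j, (A.map F) (.inr j) (.inr j) * (z ∘ Sum.inr) j ^ 2)
        = ∑ j, phiF α (d j) * (z ∘ Sum.inr) j ^ 2 :=
      Finset.sum_congr rfl fun j _ => by rw [h2]
    rw [e1, e2]
    exact block_psd hα c d b (fun i j => F (b i j)) hc hd hF1 hF2 hF3
      (fun i j => hFsq (b i j)) _ _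
  · intro i j hne hadj
    rw [Matrix.map_apply, hpat i j hne hadj, hF0]

noncomputable def r2 : ℝ := (2:ℝ) ^ (-(2:ℝ)⁻¹)

lemma r2_pos : 0 < r2 := Real.rpow_pos_of_pos (by norm_num) _

lemma r2_mul : r2 * r2 = 2⁻¹ := by
  unfold r2
  rw [← Real.rpow_add (by norm_num : (0:ℝ) < 2)]
  rw [show (-(2:ℝ)⁻¹ + -(2:ℝ)⁻¹) = (-1 : ℝ) by norm_num]
  rw [Real.rpow_neg (by norm_num : (0:ℝ) ≤ 2), Real.rpow_one]

lemma r2_rpow_lt {α : ℝ} (h : α < 2) : 2⁻¹ < r2 ^ α := by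
  have h1 : r2 ^ α = (2:ℝ) ^ (-(2:ℝ)⁻¹ * α) := by
    unfold r2
    rw [Real.rpow_mul (by norm_num : (0:ℝ) ≤ 2)]
  have h2 : (2:ℝ) ^ (-1:ℝ) < (2:ℝ) ^ (-(2:ℝ)⁻¹ * α) := by
    apply (Real.rpow_lt_rpow_left_iff (by norm_num : (1:ℝ) < 2)).mpr
    nlinarith
  have h3 : (2:ℝ) ^ (-1:ℝ) = 2⁻¹ := by
    rw [Real.rpow_neg (by norm_num : (0:ℝ) ≤ 2), Real.rpow_one]
  rw [h1]; rw [h3] at h2; exact h2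

lemma r2_rpow_sq_lt {α : ℝ} (h : α < 1) : 2⁻¹ < r2 ^ α * r2 ^ α := by
  rw [← Real.rpow_add r2_pos]
  have h1 : r2 ^ (α + α) = (2:ℝ) ^ (-(2:ℝ)⁻¹ * (α + α)) := by
    unfold r2
    rw [Real.rpow_mul (by norm_num : (0:ℝ) ≤ 2)]
  have h2 : (2:ℝ) ^ (-1:ℝ) < (2:ℝ) ^ (-(2:ℝ)⁻¹ * (α + α)) := by
    apply (Real.rpow_lt_rpow_left_iff (by norm_num : (1:ℝ) < 2)).mpr
    nlinarith
  have h3 : (2:ℝ) ^ (-1:ℝ) = 2⁻¹ := by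
    rw [Real.rpow_neg (by norm_num : (0:ℝ) ≤ 2), Real.rpow_one]
  rw [h1]; rw [h3] at h2; exact h2

lemma phiF_one (α : ℝ) : phiF α 1 = 1 := by simp [phiF]
lemma phiF_zero' (α : ℝ) : phiF α 0 = 0 := if_pos rfl
lemma phiF_r2 (α : ℝ) : phiF α r2 = r2 ^ α := by
  rw [phiF, if_neg r2_pos.ne', abs_of_pos r2_pos]
lemma phiF_neg_r2 (α : ℝ) : phiF α (-r2) = r2 ^ α := by
  rw [phiF, if_neg (neg_ne_zero.mpr r2_pos.ne'), abs_neg, abs_of_pos r2_pos]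
lemma psiF_one (α : ℝ) : psiF α 1 = 1 := by
  simp [psiF, Real.sign_of_pos (by norm_num : (0:ℝ) < 1)]
lemma psiF_zero' (α : ℝ) : psiF α 0 = 0 := if_pos rfl
lemma psiF_r2 (α : ℝ) : psiF α r2 = r2 ^ α := by
  rw [psiF, if_neg r2_pos.ne', Real.sign_of_pos r2_pos, abs_of_pos r2_pos, one_mul]
lemma psiF_neg_r2 (α : ℝ) : psiF α (-r2) = -(r2 ^ α) := by
  rw [psiF, if_neg (neg_ne_zero.mpr r2_pos.ne'), Real.sign_of_neg (neg_neg_iff_pos.mpr r2_pos),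
    abs_neg, abs_of_pos r2_pos]
  ring

noncomputable def wvec : Fin 2 ⊕ Fin 2 → Fin 2 → ℝ :=
  Sum.elim (fun i => if i = 0 then ![1,0] else ![0,1])
    (fun j => if j = 0 then ![r2,r2] else ![-r2,r2])

noncomputable def tbl : Fin 2 ⊕ Fin 2 → Fin 2 ⊕ Fin 2 → ℝ := fun p q =>
  match p, q with
  | .inl i, .inl i' => if i = i' then 1 else 0
  | .inr j, .inr j' => if j = j' then 1 else 0
  | .inl i, .inr j => if i = 0 ∧ j = 1 then -r2 else r2
  | .inr j, .inl i => if i = 0 ∧ j = 1 then -r2 else r2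

lemma wvec_dot (p q : Fin 2 ⊕ Fin 2) : ∑ k, wvec p k * wvec q k = tbl p q := by
  have hr := r2_mul
  rcases p with i | j <;> rcases q with i' | j'
  · fin_cases i <;> fin_cases i' <;> simp [wvec, tbl, Fin.sum_univ_two] <;> linarith
  · fin_cases i <;> fin_cases j' <;> simp [wvec, tbl, Fin.sum_univ_two] <;> linarith
  · fin_cases j <;> fin_cases i' <;> simp [wvec, tbl, Fin.sum_univ_two] <;> linarith
  · fin_cases j <;> fin_cases j' <;> simp [wvec, tbl, Fin.sum_univ_two] <;> linarith

lemma sum_extend {V : Type*} [Fintype V] [DecidableEq V] {κ : Type*} [Fintype κ]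
    {f : κ → V} (hf : Function.Injective f) (y : κ → ℝ) (h : V → ℝ) :
    ∑ v, Function.extend f y 0 v * h v = ∑ p, y p * h (f p) := by
  classical
  have h1 : ∑ v ∈ Finset.univ.image f, (Function.extend f y 0 v * h v)
      = ∑ p, Function.extend f y 0 (f p) * h (f p) :=
    Finset.sum_image (fun a _ b _ hab => hf hab)
  have h2 : ∑ v, Function.extend f y 0 v * h v
      = ∑ v ∈ Finset.univ.image f, (Function.extend f y 0 v * h v) := by
    refine (Finset.sum_subset (Finset.subset_univ _) ?_).symm
    intro v _ hv
    have : ¬∃ p, f p = v := by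
      intro ⟨p, hp⟩
      exact hv (Finset.mem_image.mpr ⟨p, Finset.mem_univ p, hp⟩)
    rw [Function.extend_apply' _ _ _ this]
    simp
  rw [h2, h1]
  refine Finset.sum_congr rfl fun p _ => ?_
  rw [hf.extend_apply]

lemma eval_map {V : Type*} [Fintype V] [DecidableEq V] {κ : Type*} [Fintype κ]
    {f : κ → V} (hf : Function.Injective f) (M : Matrix V V ℝ) (y : κ → ℝ) :
    (Function.extend f y 0) ⬝ᵥ (M *ᵥ (Function.extend f y 0))
      = ∑ p, ∑ q, y p * y q * M (f p) (f q) := by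
  classical
  have step1 : (Function.extend f y 0) ⬝ᵥ (M *ᵥ (Function.extend f y 0))
      = ∑ v, Function.extend f y 0 v * (∑ u, M v u * Function.extend f y 0 u) := rfl
  rw [step1, sum_extend hf]
  refine Finset.sum_congr rfl fun p _ => ?_
  have : ∑ u, M (f p) u * Function.extend f y 0 u
      = ∑ u, Function.extend f y 0 u * M (f p) u :=
    Finset.sum_congr rfl fun u _ => mul_comm _ _
  rw [this, sum_extend hf]
  rw [Finset.mul_sum]
  exact Finset.sum_congr rfl fun q _ => by ring

lemma counterA {m : ℕ} (G : SimpleGraph (Fin 2 ⊕ Fin m))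
    (f : Fin 2 ⊕ Fin 2 → Fin 2 ⊕ Fin m) (hf : Function.Injective f)
    (hadj : ∀ u v, (completeBipartiteGraph (Fin 2) (Fin 2)).Adj u v → G.Adj (f u) (f v)) :
    ∃ A ∈ PG G Set.univ, ∀ p q, A (f p) (f q) = tbl p q := by
  classical
  set hv : (Fin 2 ⊕ Fin m) → Fin 2 → ℝ := Function.extend f wvec 0 with hv_def
  set X : Matrix (Fin 2) (Fin 2 ⊕ Fin m) ℝ := Matrix.of (fun k v => hv v k) with hX_def
  refine ⟨Xᴴ * X, ⟨Matrix.posSemidef_conjTranspose_mul_self X, fun i j => Set.mem_univ _, ?_⟩, ?_⟩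
  · intro v u hne hnadj
    have hentry : (Xᴴ * X) v u = ∑ k, hv v k * hv u k := by
      simp [Matrix.mul_apply, Matrix.conjTranspose_apply, hX_def]
    rw [hentry]
    by_cases hp : ∃ p, f p = v
    · by_cases hq : ∃ q, f q = u
      · obtain ⟨p, rfl⟩ := hp
        obtain ⟨q, rfl⟩ := hq
        have hpq : p ≠ q := fun h => hne (by rw [h])
        have hvp : hv (f p) = wvec p := by rw [hv_def, hf.extend_apply]
        have hvq : hv (f q) = wvec q := by rw [hv_def, hf.extend_apply]
        simp only [hvp, hvq]
        rw [wvec_dot]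
        rcases p with i | j <;> rcases q with i' | j'
        · simp only [tbl]
          rw [if_neg (fun h => hpq (by rw [h]))]
        · exact absurd (hadj _ _ (by simp)) hnadj
        · exact absurd (hadj _ _ (by simp)) hnadj
        · simp only [tbl]
          rw [if_neg (fun h => hpq (by rw [h]))]
      · have : hv u = 0 := by rw [hv_def, Function.extend_apply' _ _ _ hq]; rfl
        simp [this]
    · have : hv v = 0 := by rw [hv_def, Function.extend_apply' _ _ _ hp]; rfl
      simp [this]
  · intro p q
    have hentry : (Xᴴ * X) (f p) (f q) = ∑ k, hv (f p) k * hv (f q) k := by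
      simp [Matrix.mul_apply, Matrix.conjTranspose_apply, hX_def]
    rw [hentry, hv_def]
    simp only [hf.extend_apply]
    exact wvec_dot p q

lemma counter_phi {m : ℕ} (G : SimpleGraph (Fin 2 ⊕ Fin m))
    (f : Fin 2 ⊕ Fin 2 → Fin 2 ⊕ Fin m) (hf : Function.Injective f)
    (hadj : ∀ u v, (completeBipartiteGraph (Fin 2) (Fin 2)).Adj u v → G.Adj (f u) (f v))
    {α : ℝ} (hα : α < 2) :
    ∃ A ∈ PG G Set.univ, ¬ (A.map (phiF α)).PosSemidef := by
  classical
  obtain ⟨A, hmem, htbl⟩ := counterA G f hf hadj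
  refine ⟨A, hmem, fun hpsd => ?_⟩
  set y : Fin 2 ⊕ Fin 2 → ℝ := Sum.elim ![(1:ℝ),1] ![(-1:ℝ),-1] with hy
  have h := hpsd.dotProduct_mulVec_nonneg (Function.extend f y 0)
  rw [star_trivial, eval_map hf] at h
  have hval : ∑ p, ∑ q, y p * y q * (A.map (phiF α)) (f p) (f q) = 4 - 8 * r2 ^ α := by
    simp only [Matrix.map_apply, htbl]
    simp only [Fintype.sum_sum_type, Fin.sum_univ_two]
    simp [hy, tbl, phiF_one, phiF_zero', phiF_r2, phiF_neg_r2]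
    ring
  rw [hval] at h
  have := r2_rpow_lt hα
  linarith

lemma counter_psi {m : ℕ} (G : SimpleGraph (Fin 2 ⊕ Fin m))
    (f : Fin 2 ⊕ Fin 2 → Fin 2 ⊕ Fin m) (hf : Function.Injective f)
    (hadj : ∀ u v, (completeBipartiteGraph (Fin 2) (Fin 2)).Adj u v → G.Adj (f u) (f v))
    {α : ℝ} (hα : α < 1) :
    ∃ A ∈ PG G Set.univ, ¬ (A.map (psiF α)).PosSemidef := by
  classical
  obtain ⟨A, hmem, htbl⟩ := counterA G f hf hadj
  refine ⟨A, hmem, fun hpsd => ?_⟩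
  set y : Fin 2 ⊕ Fin 2 → ℝ := Sum.elim ![(1:ℝ),0] ![-(r2 ^ α), r2 ^ α] with hy
  have h := hpsd.dotProduct_mulVec_nonneg (Function.extend f y 0)
  rw [star_trivial, eval_map hf] at h
  have hval : ∑ p, ∑ q, y p * y q * (A.map (psiF α)) (f p) (f q)
      = 1 - 2 * (r2 ^ α * r2 ^ α) := by
    simp only [Matrix.map_apply, htbl]
    simp only [Fintype.sum_sum_type, Fin.sum_univ_two]
    simp [hy, tbl, psiF_one, psiF_zero', psiF_r2, psiF_neg_r2]
    ring
  rw [hval] at h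
  have := r2_rpow_sq_lt hα
  linarith

end GKRAux

/-- If `K_{2,2} ⊆ G ⊆ K_{2,m}` (on the vertex set of `K_{2,m}`, `m ≥ 2`), then
`H_G^φ = [2, ∞)` and `{1} ∪ [2, ∞) ⊆ H_G^ψ ⊆ [1, ∞)`. -/
theorem stmt19 (m : ℕ) (hm : 2 ≤ m) (G : SimpleGraph (Fin 2 ⊕ Fin m))
    (hsub : G ≤ completeBipartiteGraph (Fin 2) (Fin m))
    (hK22 : ∃ f : Fin 2 ⊕ Fin 2 → Fin 2 ⊕ Fin m, Function.Injective f ∧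
      ∀ u v, (completeBipartiteGraph (Fin 2) (Fin 2)).Adj u v → G.Adj (f u) (f v)) :
    HSetPhi G = Set.Ici 2 ∧
    {(1 : ℝ)} ∪ Set.Ici 2 ⊆ HSetPsi G ∧ HSetPsi G ⊆ Set.Ici 1 := by
  classical
  obtain ⟨f, hf, hadj⟩ := hK22
  have hmem_phi : ∀ α : ℝ, 2 ≤ α → α ∈ HSetPhi G := fun α hα A hA =>
    map_mem_PG G hsub hα (phiF α) (fun x _ => rfl) (sq_phiF α) hA
  refine ⟨?_, ?_, ?_⟩
  · apply Set.Subset.antisymm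
    · intro α hα
      rw [Set.mem_Ici]
      by_contra h
      push_neg at h
      obtain ⟨A, hmem, hnpsd⟩ := counter_phi G f hf hadj h
      exact hnpsd (hα A hmem).1
    · intro α hα
      exact hmem_phi α hα
  · intro α hα
    rcases hα with h1 | h2
    · rw [Set.mem_singleton_iff] at h1
      subst h1
      intro A hA
      have hid : A.map (psiF 1) = A := by
        ext v w; rw [Matrix.map_apply, psiF_one']
      rw [hid]
      exact ⟨hA.1, fun i j => Set.mem_univ _, hA.2.2⟩
    · intro A hA
      exact map_mem_PG G hsub (Set.mem_Ici.mp h2) (psiF α)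
        (fun x hx => psiF_eq_phiF hx) (sq_psiF α) hA
  · intro α hα
    rw [Set.mem_Ici]
    by_contra h
    push_neg at h
    obtain ⟨A, hmem, hnpsd⟩ := counter_psi G f hf hadj h
    exact hnpsd (hα A hmem).1
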